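/- The RS-game (N₀, v) corresponding to an RS-situation is superadditive: for all disjoint coalitions S, T ⊆ N₀, v(S ∪ T) ≥ v(S) + v(T). -/
import Mathlib


open Finset

/-- An RS-situation with `n` retailers; the supplier is treated separately.
`c` is the unit production cost, `w` the wholesale price function and
`p i` the expected price function of retailer `i`.  All price functions are
decreasing and continuous on `[0, ∞)`, `w` exceeds `c` everywhere,
`p i 0 > w 0` and `p i` reaches the value `c` at some positive quantity. -/
structure RSSituation (n : ℕ) where
  c : ℝ
  w : ℝ → ℝ
  p : Fin n → ℝ → ℝ
  w_anti : ∀ ⦃q q' : ℝ⦄, 0 ≤ q → q ≤ q' → w q' ≤ w q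
  w_cont : ContinuousOn w (Set.Ici 0)
  w_gt_c : ∀ q : ℝ, 0 ≤ q → c < w q
  p_anti : ∀ i : Fin n, ∀ ⦃q q' : ℝ⦄, 0 ≤ q → q ≤ q' → p i q' ≤ p i q
  p_cont : ∀ i : Fin n, ContinuousOn (p i) (Set.Ici 0)
  p_zero_gt : ∀ i : Fin n, w 0 < p i 0
  exists_eq_c : ∀ i : Fin n, ∃ q : ℝ, 0 < q ∧ p i q = c

namespace RSSituation

variable {n : ℕ}

/-- The feasible set `Q^S ⊆ [0,∞)^S` of order vectors for a coalition `S` of retailers. -/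
def QSet (R : RSSituation n) (S : Finset (Fin n)) : Set (S → ℝ) :=
  {q | ∀ i : S, 0 ≤ q i ∧ R.w (∑ j : S, q j) ≤ R.p i.1 (q i)}

/-- The joint profit `∑_{i ∈ S} (p_i(q_i) - w(q_S)) q_i` of a coalition `S` of retailers. -/
def coalProfit (R : RSSituation n) (S : Finset (Fin n)) (q : S → ℝ) : ℝ :=
  ∑ i : S, (R.p i.1 (q i) - R.w (∑ j : S, q j)) * q i

/-- `q` is an optimal order vector for the coalition `S` of retailers. -/
def IsCoalOpt (R : RSSituation n) (S : Finset (Fin n)) (q : S → ℝ) : Prop :=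
  q ∈ R.QSet S ∧ ∀ q' ∈ R.QSet S, R.coalProfit S q' ≤ R.coalProfit S q

/-- The feasible set of order quantities of retailer `i` at unit price `c`. -/
def QcSet (R : RSSituation n) (i : Fin n) : Set ℝ :=
  {q | 0 ≤ q ∧ R.c ≤ R.p i q}

/-- The profit `(p_i(q) - c) q` of retailer `i` at unit price `c`. -/
def indProfit (R : RSSituation n) (i : Fin n) (q : ℝ) : ℝ :=
  (R.p i q - R.c) * q

/-- `q` is an optimal order quantity for retailer `i` at unit price `c`. -/
def IsIndOpt (R : RSSituation n) (i : Fin n) (q : ℝ) : Prop :=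
  q ∈ R.QcSet i ∧ ∀ q' ∈ R.QcSet i, R.indProfit i q' ≤ R.indProfit i q

/-- `v` is the RS-game determined by chosen optimal order vectors `qS S`
(for each retailer coalition `S`) and `qc i` (for each retailer `i`, when
cooperating with the supplier).  Players: `none` is the supplier `0`,
`some i` is retailer `i`. -/
def IsRSGame (R : RSSituation n) (qS : (S : Finset (Fin n)) → (S → ℝ))
    (qc : Fin n → ℝ) (v : Finset (Option (Fin n)) → ℝ) : Prop :=
  v ∅ = 0 ∧ v {none} = 0 ∧
    (∀ S : Finset (Fin n), S.Nonempty → v (S.image some) = R.coalProfit S (qS S)) ∧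
    (∀ S : Finset (Fin n), S.Nonempty →
      v (insert none (S.image some)) = ∑ i ∈ S, R.indProfit i (qc i))

/-- The core of a TU game on the player set `N₀ = Option (Fin n)`. -/
def core (v : Finset (Option (Fin n)) → ℝ) : Set (Option (Fin n) → ℝ) :=
  {x | ∑ i : Option (Fin n), x i = v Finset.univ ∧
    ∀ T : Finset (Option (Fin n)), v T ≤ ∑ i ∈ T, x i}

end RSSituation


namespace RSSituation
variable {n : ℕ} (R : RSSituation n)

lemma qsum_nonneg {S : Finset (Fin n)} {q : S → ℝ} (hq : q ∈ R.QSet S) :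
    0 ≤ ∑ j : S, q j :=
  Finset.sum_nonneg fun i _ => (hq i).1

lemma indOpt_nonneg {i : Fin n} {q0 : ℝ} (h : R.IsIndOpt i q0) : 0 ≤ R.indProfit i q0 := by
  have h0 : (0:ℝ) ∈ R.QcSet i :=
    ⟨le_refl 0, le_of_lt (lt_trans (R.w_gt_c 0 le_rfl) (R.p_zero_gt i))⟩
  have := h.2 0 h0
  simpa [indProfit] using this

lemma coal_le_ind (qc : Fin n → ℝ) (hqc : ∀ i, R.IsIndOpt i (qc i))
    {B : Finset (Fin n)} {q : B → ℝ} (hq : q ∈ R.QSet B) :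
    R.coalProfit B q ≤ ∑ i ∈ B, R.indProfit i (qc i) := by
  have htB : 0 ≤ ∑ j : B, q j := R.qsum_nonneg hq
  have h1 : R.coalProfit B q ≤ ∑ i : B, R.indProfit i.1 (qc i.1) := by
    apply Finset.sum_le_sum
    intro i _
    have hnn := (hq i).1
    have hfe := (hq i).2
    have hwc : R.c ≤ R.w (∑ j : B, q j) := le_of_lt (R.w_gt_c _ htB)
    have hc : R.c ≤ R.p i.1 (q i) := le_trans hwc hfe
    have step1 : (R.p i.1 (q i) - R.w (∑ j : B, q j)) * q i ≤ R.indProfit i.1 (q i) := by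
      unfold indProfit
      apply mul_le_mul_of_nonneg_right _ hnn
      linarith
    exact le_trans step1 ((hqc i.1).2 _ ⟨hnn, hc⟩)
  calc R.coalProfit B q ≤ ∑ i : B, R.indProfit i.1 (qc i.1) := h1
    _ = ∑ i ∈ B, R.indProfit i (qc i) := Finset.sum_coe_sort B (fun i => R.indProfit i (qc i))

lemma coal_superadd (qS : (S : Finset (Fin n)) → (S → ℝ))
    (hqS : ∀ S : Finset (Fin n), S.Nonempty → R.IsCoalOpt S (qS S))
    {A B : Finset (Fin n)} (hA : A.Nonempty) (hB : B.Nonempty) (hd : Disjoint A B) :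
    R.coalProfit A (qS A) + R.coalProfit B (qS B) ≤ R.coalProfit (A ∪ B) (qS (A ∪ B)) := by
  classical
  have hAf := (hqS A hA).1
  have hBf := (hqS B hB).1
  set Q : Fin n → ℝ := fun i =>
    if h : i ∈ A then qS A ⟨i, h⟩ else if h : i ∈ B then qS B ⟨i, h⟩ else 0 with hQdef
  have hQA : ∀ i (h : i ∈ A), Q i = qS A ⟨i, h⟩ := fun i h => dif_pos h
  have hQB : ∀ i (h : i ∈ B), Q i = qS B ⟨i, h⟩ := by
    intro i h
    have hiA : i ∉ A := fun h' => Finset.disjoint_left.mp hd h' h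
    simp [hQdef, hiA, h]
  have hsumA : ∑ i ∈ A, Q i = ∑ i : A, qS A i := by
    rw [← Finset.sum_coe_sort A Q]
    exact Finset.sum_congr rfl fun i _ => hQA i.1 i.2
  have hsumB : ∑ i ∈ B, Q i = ∑ i : B, qS B i := by
    rw [← Finset.sum_coe_sort B Q]
    exact Finset.sum_congr rfl fun i _ => hQB i.1 i.2
  have htA : 0 ≤ ∑ j : A, qS A j := R.qsum_nonneg hAf
  have htB : 0 ≤ ∑ j : B, qS B j := R.qsum_nonneg hBf
  set qAB : (↥(A ∪ B)) → ℝ := fun i => Q i.1 with hqABdef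
  have htot : ∑ j : ↥(A ∪ B), qAB j = (∑ j : A, qS A j) + (∑ j : B, qS B j) := by
    rw [Finset.sum_coe_sort (A ∪ B) Q, Finset.sum_union hd, hsumA, hsumB]
  have hQnn : ∀ i : Fin n, 0 ≤ Q i := by
    intro i
    by_cases h : i ∈ A
    · rw [hQA i h]; exact (hAf ⟨i, h⟩).1
    · by_cases h' : i ∈ B
      · rw [hQB i h']; exact (hBf ⟨i, h'⟩).1
      · simp [hQdef, h, h']
  have hwtot_le_A : R.w (∑ j : ↥(A ∪ B), qAB j) ≤ R.w (∑ j : A, qS A j) := by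
    rw [htot]; exact R.w_anti htA (by linarith)
  have hwtot_le_B : R.w (∑ j : ↥(A ∪ B), qAB j) ≤ R.w (∑ j : B, qS B j) := by
    rw [htot]; exact R.w_anti htB (by linarith)
  have hfeas : qAB ∈ R.QSet (A ∪ B) := by
    intro i
    refine ⟨hQnn i.1, ?_⟩
    rcases Finset.mem_union.mp i.2 with h | h
    · calc R.w (∑ j : ↥(A ∪ B), qAB j) ≤ R.w (∑ j : A, qS A j) := hwtot_le_A
        _ ≤ R.p i.1 (qS A ⟨i.1, h⟩) := (hAf ⟨i.1, h⟩).2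
        _ = R.p i.1 (qAB i) := congrArg (R.p i.1) (hQA i.1 h).symm
    · calc R.w (∑ j : ↥(A ∪ B), qAB j) ≤ R.w (∑ j : B, qS B j) := hwtot_le_B
        _ ≤ R.p i.1 (qS B ⟨i.1, h⟩) := (hBf ⟨i.1, h⟩).2
        _ = R.p i.1 (qAB i) := congrArg (R.p i.1) (hQB i.1 h).symm
  have hABne : (A ∪ B).Nonempty := hA.mono Finset.subset_union_left
  have hopt := (hqS (A ∪ B) hABne).2 qAB hfeas
  refine le_trans ?_ hopt
  -- compute coalProfit (A ∪ B) qAB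
  have hsplit : R.coalProfit (A ∪ B) qAB
      = (∑ i ∈ A, (R.p i (Q i) - R.w (∑ j : ↥(A ∪ B), qAB j)) * Q i)
        + ∑ i ∈ B, (R.p i (Q i) - R.w (∑ j : ↥(A ∪ B), qAB j)) * Q i := by
    unfold coalProfit
    rw [Finset.sum_coe_sort (A ∪ B) (fun i => (R.p i (Q i) - R.w (∑ j : ↥(A ∪ B), qAB j)) * Q i),
      Finset.sum_union hd]
  have hpartA : R.coalProfit A (qS A)
      ≤ ∑ i ∈ A, (R.p i (Q i) - R.w (∑ j : ↥(A ∪ B), qAB j)) * Q i := by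
    unfold coalProfit
    rw [← Finset.sum_coe_sort A (fun i => (R.p i (Q i) - R.w (∑ j : ↥(A ∪ B), qAB j)) * Q i)]
    apply Finset.sum_le_sum
    intro i _
    rw [hQA i.1 i.2]
    apply mul_le_mul_of_nonneg_right _ (hAf i).1
    have : R.w (∑ j : ↥(A ∪ B), qAB j) ≤ R.w (∑ j : A, qS A j) := hwtot_le_A
    linarith
  have hpartB : R.coalProfit B (qS B)
      ≤ ∑ i ∈ B, (R.p i (Q i) - R.w (∑ j : ↥(A ∪ B), qAB j)) * Q i := by
    unfold coalProfit
    rw [← Finset.sum_coe_sort B (fun i => (R.p i (Q i) - R.w (∑ j : ↥(A ∪ B), qAB j)) * Q i)]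
    apply Finset.sum_le_sum
    intro i _
    rw [hQB i.1 i.2]
    apply mul_le_mul_of_nonneg_right _ (hBf i).1
    have : R.w (∑ j : ↥(A ∪ B), qAB j) ≤ R.w (∑ j : B, qS B j) := hwtot_le_B
    linarith
  rw [hsplit]
  exact add_le_add hpartA hpartB

end RSSituation

/-- RS-games are superadditive. -/
theorem rs_game_superadditive (n : ℕ) (R : RSSituation n)
    (qS : (S : Finset (Fin n)) → (S → ℝ)) (qc : Fin n → ℝ)
    (hqS : ∀ S : Finset (Fin n), S.Nonempty → R.IsCoalOpt S (qS S))
    (hqc : ∀ i : Fin n, R.IsIndOpt i (qc i))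
    (v : Finset (Option (Fin n)) → ℝ) (hv : R.IsRSGame qS qc v) :
    ∀ S T : Finset (Option (Fin n)), Disjoint S T → v S + v T ≤ v (S ∪ T) := by
  classical
  obtain ⟨hv0, hvnone1, hvS, hvN⟩ := hv
  -- value of a coalition containing the supplier
  have hval_sup : ∀ U : Finset (Option (Fin n)), none ∈ U →
      v U = ∑ i ∈ U.eraseNone, R.indProfit i (qc i) := by
    intro U hn
    rcases U.eraseNone.eq_empty_or_nonempty with he | hne
    · have hU : U = {none} := by
        have h1 : U.erase none = ∅ := by
          rw [← Finset.image_some_eraseNone, he, Finset.image_empty]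
        have := Finset.insert_erase hn
        rw [h1] at this
        simpa using this.symm
      rw [hU, hvnone1, Finset.eraseNone_none, Finset.sum_empty]
    · have h1 := hvN U.eraseNone hne
      rw [Finset.image_some_eraseNone, Finset.insert_erase hn] at h1
      exact h1
  -- value of a retailer coalition
  have hval_ret : ∀ U : Finset (Option (Fin n)), none ∉ U → U.eraseNone.Nonempty →
      v U = R.coalProfit U.eraseNone (qS U.eraseNone) := by
    intro U hn hne
    have h1 := hvS U.eraseNone hne
    rw [Finset.image_some_eraseNone, Finset.erase_eq_of_notMem hn] at h1
    exact h1
  have hempty : ∀ U : Finset (Option (Fin n)), none ∉ U → U.eraseNone = ∅ → U = ∅ := by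
    intro U hn he
    have h1 : U.erase none = ∅ := by
      rw [← Finset.image_some_eraseNone, he, Finset.image_empty]
    rwa [Finset.erase_eq_of_notMem hn] at h1
  suffices key : ∀ S T : Finset (Option (Fin n)), Disjoint S T → none ∉ T →
      v S + v T ≤ v (S ∪ T) by
    intro S T hd
    by_cases hT : none ∈ T
    · have hS : none ∉ S := fun hS => Finset.disjoint_left.mp hd hS hT
      rw [Finset.union_comm, add_comm]
      exact key T S hd.symm hS
    · exact key S T hd hT
  intro S T hd hT
  have hdE : Disjoint S.eraseNone T.eraseNone := by
    rw [Finset.disjoint_left]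
    intro a ha ha'
    exact Finset.disjoint_left.mp hd (Finset.mem_eraseNone.mp ha) (Finset.mem_eraseNone.mp ha')
  rcases T.eraseNone.eq_empty_or_nonempty with hTe | hTne
  · rw [hempty T hT hTe, Finset.union_empty, hv0, add_zero]
  · by_cases hS : none ∈ S
    · have h1 := hval_sup S hS
      have h2 := hval_sup (S ∪ T) (Finset.mem_union_left T hS)
      have h3 := hval_ret T hT hTne
      rw [h1, h2, h3, Finset.eraseNone_union, Finset.sum_union hdE]
      have h4 : R.coalProfit T.eraseNone (qS T.eraseNone)
          ≤ ∑ i ∈ T.eraseNone, R.indProfit i (qc i) :=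
        R.coal_le_ind qc hqc (hqS T.eraseNone hTne).1
      linarith
    · rcases S.eraseNone.eq_empty_or_nonempty with hSe | hSne
      · rw [hempty S hS hSe, Finset.empty_union, hv0, zero_add]
      · have hST : none ∉ S ∪ T := by
          rw [Finset.mem_union]; tauto
        have hSTne : (S ∪ T).eraseNone.Nonempty := by
          rw [Finset.eraseNone_union]
          exact hSne.mono Finset.subset_union_left
        have h1 := hval_ret S hS hSne
        have h2 := hval_ret (S ∪ T) hST hSTne
        have h3 := hval_ret T hT hTne
        rw [Finset.eraseNone_union] at h2
        rw [h1, h2, h3]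
        exact R.coal_superadd qS hqS hSne hTne hdE
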